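/- For t - n ≤ s ≤ t and ε, η ∈ {±1}, the n-th q-derivative of a discrete delta function satisfies (∂^n δ_{ηγq^t})(εγq^s) = (-1)^{t-s} [ε=η] η^n γ^{-n} q^{-sn} (1-q)^{-n} [n choose t-s]_q q^{-(t-s)(t-s-1)/2 - (t-s)(n-t+s)}; in particular ∂^n δ_{ηγq^t} is a linear combination of the delta functions δ_{ηγq^s} for t-n ≤ s ≤ t. -/

import Mathlib

open scoped BigOperators

noncomputable section

/-- finite q-Pochhammer symbol `(a;q)_k` -/
def qPoch (q a : ℝ) (k : ℕ) : ℝ := ∏ j ∈ Finset.range k, (1 - a * q ^ j)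

/-- infinite q-Pochhammer symbol `(a;q)_∞` -/
def qPochInf (q a : ℝ) : ℝ := ∏' j : ℕ, (1 - a * q ^ j)

/-- q-integral over the lattice `L(γ) = {± q^k γ}` -/
def qInt (q γ : ℝ) (f : ℝ → ℝ) : ℝ :=
  (1 - q) * ∑' k : ℤ, (q ^ k * γ) * (f (q ^ k * γ) + f (-(q ^ k * γ)))

/-- k-th q-moment -/
def qMoment (q γ : ℝ) (e : ℕ) (f : ℝ → ℝ) : ℝ :=
  q ^ (e * (e + 1) / 2) * qInt q γ (fun x => f x * x ^ e)

/-- k-th strict q-moment -/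
def qNu (q γ : ℝ) (e : ℕ) (f : ℝ → ℝ) : ℝ :=
  q ^ (e * (e + 1) / 2) * qInt q γ (fun x => |f x * x ^ e|)

/-- q-derivative -/
def qDeriv (q : ℝ) (f : ℝ → ℝ) : ℝ → ℝ := fun x => (f x - f (q * x)) / ((1 - q) * x)

/-- q-factorial `[e]_q!` -/
def qFact (q : ℝ) (e : ℕ) : ℝ := qPoch q q e / (1 - q) ^ e

/-- q-binomial coefficient -/
def qBinom (q : ℝ) (n k : ℕ) : ℝ := qPoch q q n / (qPoch q q k * qPoch q q (n - k))

/-- q-convolution -/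
def qConv (q γ : ℝ) (f g : ℝ → ℝ) : ℝ → ℝ :=
  fun x => ∑' e : ℕ, (-1) ^ e * qMoment q γ e f / qFact q e * (qDeriv q)^[e] g x

/-- the q-Gaussian `e_{q²}(-x²)` -/
def qGauss (q : ℝ) : ℝ → ℝ := fun x => 1 / qPochInf (q ^ 2) (-(x ^ 2))

/-- discrete q-Hermite II polynomials -/
def qHermiteII (q : ℝ) (k : ℕ) (x : ℝ) : ℝ :=
  qPoch q q k * ∑ l ∈ Finset.range (k / 2 + 1),
    (-1) ^ l * q ^ (2 * l ^ 2 + l) / q ^ (2 * l * k) * x ^ (k - 2 * l) /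
      (qPoch (q ^ 2) (q ^ 2) l * qPoch q q (k - 2 * l))

/-- discrete delta function on the lattice, supported at `η γ q^p` -/
def qdelta (q γ η : ℝ) (p : ℤ) : ℝ → ℝ := fun x => if x = η * γ * q ^ p then 1 else 0

lemma qPoch_q_pos {q : ℝ} (hq0 : 0 < q) (hq1 : q < 1) (k : ℕ) : 0 < qPoch q q k := by
  refine Finset.prod_pos fun j _ => ?_
  have h1 : q ^ j ≤ 1 := pow_le_one₀ hq0.le hq1.le
  nlinarith

lemma qPoch_succ (q a : ℝ) (k : ℕ) : qPoch q a (k + 1) = qPoch q a k * (1 - a * q ^ k) :=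
  Finset.prod_range_succ _ _

lemma qBinom_pascal {q : ℝ} (hq0 : 0 < q) (hq1 : q < 1) (n k : ℕ) (h1 : 1 ≤ k) (h2 : k ≤ n) :
    qBinom q (n + 1) k = q ^ k * qBinom q n k + qBinom q n (k - 1) := by
  obtain ⟨m, rfl⟩ : ∃ m, k = m + 1 := ⟨k - 1, by omega⟩
  have e1 : n + 1 - (m + 1) = n - m := by omega
  have e2 : m + 1 - 1 = m := by omega
  have e4 : n - m = n - (m + 1) + 1 := by omega
  have hfac : ∀ j : ℕ, (1 : ℝ) - q * q ^ j ≠ 0 := by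
    intro j
    have h1 : q ^ j ≤ 1 := pow_le_one₀ hq0.le hq1.le
    nlinarith
  have key : q ^ n = q ^ m * (q ^ (n - (m + 1)) * q) := by
    rw [← pow_succ, ← pow_add]; congr 1; omega
  rw [qBinom, qBinom, qBinom, e1, e2, e4, qPoch_succ, qPoch_succ, qPoch_succ, key, pow_succ]
  have hA := (qPoch_q_pos hq0 hq1 m).ne'
  have hB := (qPoch_q_pos hq0 hq1 (n - (m + 1))).ne'
  have hu := hfac m
  have hv := hfac (n - (m + 1))
  generalize qPoch q q n = Pn
  generalize qPoch q q m = A at hA ⊢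
  generalize qPoch q q (n - (m + 1)) = B at hB ⊢
  generalize q ^ m = c at hu key ⊢
  generalize q ^ (n - (m + 1)) = d at hv key ⊢
  field_simp
  ring

lemma qPoch_zero' (q a : ℝ) : qPoch q a 0 = 1 := Finset.prod_range_zero _

lemma qBinom_zero {q : ℝ} (hq0 : 0 < q) (hq1 : q < 1) (n : ℕ) : qBinom q n 0 = 1 := by
  rw [qBinom, Nat.sub_zero, qPoch_zero', one_mul, div_self (qPoch_q_pos hq0 hq1 n).ne']

lemma qBinom_self {q : ℝ} (hq0 : 0 < q) (hq1 : q < 1) (n : ℕ) : qBinom q n n = 1 := by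
  rw [qBinom, Nat.sub_self, qPoch_zero', mul_one, div_self (qPoch_q_pos hq0 hq1 n).ne']

noncomputable def Cfun (q γ η : ℝ) (n : ℕ) (t s : ℤ) : ℝ :=
  (-1 : ℝ) ^ (t - s) * η ^ n * γ ^ (-(n : ℤ)) *
    q ^ (-(s * n) : ℤ) * (1 - q) ^ (-(n : ℤ)) * qBinom q n (t - s).toNat *
    q ^ (-(((t - s) * (t - s - 1)) / 2 + (t - s) * ((n : ℤ) - t + s)) : ℤ)


lemma scal {q γ ε : ℝ} (hq : q ≠ 0) (hγ : γ ≠ 0) (h1q : 1 - q ≠ 0) (hε2 : ε * ε = 1)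
    (n : ℕ) (a b s : ℤ) (R B : ℝ) :
    (R * ε ^ (n + 1) * γ ^ (-((n : ℤ) + 1)) * q ^ a * (1 - q) ^ (-((n : ℤ) + 1)) * B * q ^ b) *
      ((1 - q) * (ε * γ * q ^ s))
      = R * ε ^ n * γ ^ (-(n : ℤ)) * q ^ (a + b + s) * (1 - q) ^ (-(n : ℤ)) * B := by
  have e1 : ε ^ (n + 1) * ε = ε ^ n := by rw [pow_succ, mul_assoc, hε2, mul_one]
  have e2 : γ ^ (-((n : ℤ) + 1)) * γ = γ ^ (-(n : ℤ)) := by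
    rw [show -((n : ℤ) + 1) = -(n : ℤ) + (-1) by ring, zpow_add₀ hγ, zpow_neg_one]
    field_simp
  have e3 : (1 - q) ^ (-((n : ℤ) + 1)) * (1 - q) = (1 - q) ^ (-(n : ℤ)) := by
    rw [show -((n : ℤ) + 1) = -(n : ℤ) + (-1) by ring, zpow_add₀ h1q, zpow_neg_one]
    field_simp
  have e4 : q ^ a * q ^ b * q ^ s = q ^ (a + b + s) := by
    rw [← zpow_add₀ hq, ← zpow_add₀ hq]
  calc (R * ε ^ (n + 1) * γ ^ (-((n : ℤ) + 1)) * q ^ a * (1 - q) ^ (-((n : ℤ) + 1)) * B * q ^ b) *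
      ((1 - q) * (ε * γ * q ^ s))
      = R * (ε ^ (n + 1) * ε) * (γ ^ (-((n : ℤ) + 1)) * γ) * (q ^ a * q ^ b * q ^ s) *
        ((1 - q) ^ (-((n : ℤ) + 1)) * (1 - q)) * B := by ring
    _ = _ := by rw [e1, e2, e3, e4]

lemma Cfun_expand {q γ ε : ℝ} (hq : q ≠ 0) (n : ℕ) (t s : ℤ) :
    Cfun q γ ε n t s = (-1 : ℝ) ^ (t - s) * ε ^ n * γ ^ (-(n : ℤ)) *
      q ^ (-(s * n) + -(((t - s) * (t - s - 1)) / 2 + (t - s) * ((n : ℤ) - t + s))) *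
      (1 - q) ^ (-(n : ℤ)) * qBinom q n (t - s).toNat := by
  rw [Cfun, zpow_add₀ hq]; ring

lemma Cfun_mul_D {q γ ε : ℝ} (hq : q ≠ 0) (hγ : γ ≠ 0) (h1q : 1 - q ≠ 0) (hε2 : ε * ε = 1)
    (n : ℕ) (t s : ℤ) :
    Cfun q γ ε (n + 1) t s * ((1 - q) * (ε * γ * q ^ s)) =
      (-1 : ℝ) ^ (t - s) * ε ^ n * γ ^ (-(n : ℤ)) *
        q ^ (-(s * ((n : ℤ) + 1)) + -(((t - s) * (t - s - 1)) / 2 + (t - s) * (((n : ℤ) + 1) - t + s)) + s) *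
        (1 - q) ^ (-(n : ℤ)) * qBinom q (n + 1) (t - s).toNat := by
  have c1 : ((n + 1 : ℕ) : ℤ) = (n : ℤ) + 1 := by push_cast; ring
  rw [Cfun, c1, show (-(s * ((n : ℤ) + 1))) = -(s * ((n : ℤ) + 1)) from rfl]
  exact scal hq hγ h1q hε2 n _ _ s _ _

lemma ediv2 {X Y Z : ℤ} (h : X = Y + 2 * Z) : X / 2 = Y / 2 + Z := by omega

lemma lattice_eq {q γ : ℝ} (hq0 : 0 < q) (hq1 : q < 1) (hγ : 0 < γ)
    {ε η : ℝ} (hε : ε = 1 ∨ ε = -1) (hη : η = 1 ∨ η = -1) (s t : ℤ) :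
    ε * γ * q ^ s = η * γ * q ^ t ↔ (ε = η ∧ s = t) := by
  have hs := zpow_pos hq0 s
  have ht := zpow_pos hq0 t
  constructor
  · intro h
    rcases hε with rfl | rfl <;> rcases hη with rfl | rfl
    · refine ⟨rfl, zpow_right_injective₀ hq0 hq1.ne (mul_left_cancel₀ hγ.ne' ?_)⟩
      linarith
    · exfalso; nlinarith
    · exfalso; nlinarith
    · refine ⟨rfl, zpow_right_injective₀ hq0 hq1.ne (mul_left_cancel₀ hγ.ne' ?_)⟩
      linarith
  · rintro ⟨rfl, rfl⟩; rfl

lemma main_lemma {q γ η : ℝ} (hq0 : 0 < q) (hq1 : q < 1) (hγ : 0 < γ)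
    (hη : η = 1 ∨ η = -1) (t : ℤ) :
    ∀ (n : ℕ) (ε : ℝ), (ε = 1 ∨ ε = -1) → ∀ s : ℤ,
    (qDeriv q)^[n] (qdelta q γ η t) (ε * γ * q ^ s) =
      if ε = η ∧ t - n ≤ s ∧ s ≤ t then Cfun q γ η n t s else 0 := by
  have hqne : q ≠ 0 := hq0.ne'
  have hγne : γ ≠ 0 := hγ.ne'
  have h1q : (1 : ℝ) - q ≠ 0 := sub_ne_zero.mpr (by linarith)
  have hηne : η ≠ 0 := by rcases hη with rfl | rfl <;> norm_num
  have hη2 : η * η = 1 := by rcases hη with rfl | rfl <;> norm_num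
  intro n
  induction n with
  | zero =>
    intro ε hε s
    simp only [Function.iterate_zero, id, qdelta]
    simp only [lattice_eq hq0 hq1 hγ hε hη]
    by_cases h : ε = η ∧ s = t
    · obtain ⟨rfl, rfl⟩ := h
      simp [Cfun, qBinom_zero hq0 hq1]
    · rw [if_neg h, if_neg]
      intro hc
      exact h ⟨hc.1, by omega⟩
  | succ n IH =>
    intro ε hε s
    rw [Function.iterate_succ_apply']
    have harg : q * (ε * γ * q ^ s) = ε * γ * q ^ (s + 1) := by
      rw [zpow_add₀ hqne s 1, zpow_one]; ring
    have hεs : ε * γ * q ^ s ≠ 0 := by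
      rcases hε with rfl | rfl <;> simp [hγne, zpow_ne_zero s hqne]
    simp only [qDeriv, harg]
    rw [IH ε hε s, IH ε hε (s + 1)]
    by_cases hεη : ε = η
    · subst hεη
      rcases lt_or_ge t s with h | h
      · have hc1 : ¬(ε = ε ∧ t - (n : ℤ) ≤ s ∧ s ≤ t) := by rintro ⟨-, -, h'⟩; omega
        have hc2 : ¬(ε = ε ∧ t - (n : ℤ) ≤ s + 1 ∧ s + 1 ≤ t) := by rintro ⟨-, -, h'⟩; omega
        have hc3 : ¬(ε = ε ∧ t - ((n + 1 : ℕ) : ℤ) ≤ s ∧ s ≤ t) := by rintro ⟨-, -, h'⟩; omega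
        rw [if_neg hc1, if_neg hc2, if_neg hc3]
        simp
      rcases lt_or_ge s (t - ((n + 1 : ℕ) : ℤ)) with h2 | h2
      · have hn1 : ((n + 1 : ℕ) : ℤ) = (n : ℤ) + 1 := by push_cast; ring
        rw [hn1] at h2
        have hc1 : ¬(ε = ε ∧ t - (n : ℤ) ≤ s ∧ s ≤ t) := by rintro ⟨-, h', -⟩; omega
        have hc2 : ¬(ε = ε ∧ t - (n : ℤ) ≤ s + 1 ∧ s + 1 ≤ t) := by rintro ⟨-, h', -⟩; omega
        have hc3 : ¬(ε = ε ∧ t - ((n + 1 : ℕ) : ℤ) ≤ s ∧ s ≤ t) := by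
          rintro ⟨-, h', -⟩; rw [hn1] at h'; omega
        rw [if_neg hc1, if_neg hc2, if_neg hc3]
        simp
      have hn1 : ((n + 1 : ℕ) : ℤ) = (n : ℤ) + 1 := by push_cast; ring
      rw [hn1] at h2
      have hc3 : ε = ε ∧ t - ((n + 1 : ℕ) : ℤ) ≤ s ∧ s ≤ t := ⟨rfl, by rw [hn1]; omega, h⟩
      rw [if_pos hc3, div_eq_iff (mul_ne_zero h1q hεs)]
      by_cases hst : s = t
      · -- case s = t
        have hc1 : ε = ε ∧ t - (n : ℤ) ≤ s ∧ s ≤ t := ⟨rfl, by omega, h⟩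
        have hc2 : ¬(ε = ε ∧ t - (n : ℤ) ≤ s + 1 ∧ s + 1 ≤ t) := by rintro ⟨-, -, h'⟩; omega
        rw [if_pos hc1, if_neg hc2]
        subst hst
        rw [sub_zero, Cfun_mul_D hqne hγne h1q hη2, Cfun_expand hqne]
        rw [sub_self, Int.toNat_zero, qBinom_zero hq0 hq1, qBinom_zero hq0 hq1]
        rw [show -(s * ((n : ℤ) + 1)) + -(0 * (0 - 1) / 2 + 0 * (((n : ℤ) + 1) - s + s)) + s
            = -(s * (n : ℤ)) + -(0 * (0 - 1) / 2 + 0 * ((n : ℤ) - s + s)) from by ring]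
      rcases lt_or_ge s (t - (n : ℤ)) with h3 | h3
      · -- case s = t - (n+1)
        have hs : s = t - ((n : ℤ) + 1) := by omega
        have hc1 : ¬(ε = ε ∧ t - (n : ℤ) ≤ s ∧ s ≤ t) := by rintro ⟨-, h', -⟩; omega
        have hc2 : ε = ε ∧ t - (n : ℤ) ≤ s + 1 ∧ s + 1 ≤ t := ⟨rfl, by omega, by omega⟩
        rw [if_neg hc1, if_pos hc2]
        subst hs
        rw [zero_sub, Cfun_mul_D hqne hγne h1q hη2, Cfun_expand hqne]
        have e1 : t - (t - ((n : ℤ) + 1)) = (n : ℤ) + 1 := by ring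
        have e2 : t - (t - ((n : ℤ) + 1) + 1) = (n : ℤ) := by ring
        rw [e1, e2]
        have e3 : ((n : ℤ) + 1).toNat = n + 1 := by omega
        have e4 : ((n : ℤ)).toNat = n := by omega
        rw [e3, e4, qBinom_self hq0 hq1, qBinom_self hq0 hq1]
        have hsign : (-1 : ℝ) ^ ((n : ℤ) + 1) = -((-1 : ℝ) ^ ((n : ℤ))) := by
          rw [zpow_add₀ (by norm_num : (-1 : ℝ) ≠ 0), zpow_one]; ring
        rw [hsign]
        have hdd := ediv2 (show ((n : ℤ) + 1) * (((n : ℤ) + 1) - 1)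
            = (n : ℤ) * ((n : ℤ) - 1) + 2 * (n : ℤ) from by ring)
        have hexp : -((t - ((n : ℤ) + 1) + 1) * (n : ℤ)) +
              -((n : ℤ) * ((n : ℤ) - 1) / 2 + (n : ℤ) * ((n : ℤ) - t + (t - ((n : ℤ) + 1) + 1)))
            = -((t - ((n : ℤ) + 1)) * ((n : ℤ) + 1)) +
              -(((n : ℤ) + 1) * (((n : ℤ) + 1) - 1) / 2 +
                ((n : ℤ) + 1) * (((n : ℤ) + 1) - t + (t - ((n : ℤ) + 1)))) + (t - ((n : ℤ) + 1)) := by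
          linear_combination hdd
        rw [← hexp]
        ring
      · -- middle case
        have hc1 : ε = ε ∧ t - (n : ℤ) ≤ s ∧ s ≤ t := ⟨rfl, h3, h⟩
        have hc2 : ε = ε ∧ t - (n : ℤ) ≤ s + 1 ∧ s + 1 ≤ t := ⟨rfl, by omega, by omega⟩
        rw [if_pos hc1, if_pos hc2]
        have hk1 : 1 ≤ (t - s).toNat := by omega
        have hk2 : (t - s).toNat ≤ n := by omega
        have htk : (((t - s).toNat : ℕ) : ℤ) = t - s := by omega
        have htk2 : (t - (s + 1)).toNat = (t - s).toNat - 1 := by omega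
        rw [Cfun_mul_D hqne hγne h1q hη2, Cfun_expand hqne, Cfun_expand hqne, htk2,
          qBinom_pascal hq0 hq1 n _ hk1 hk2, ← zpow_natCast q ((t - s).toNat), htk]
        have hsign : (-1 : ℝ) ^ (t - (s + 1)) = -((-1 : ℝ) ^ (t - s)) := by
          rw [show t - (s + 1) = (t - s) + (-1) from by ring,
            zpow_add₀ (by norm_num : (-1 : ℝ) ≠ 0)]
          norm_num
        rw [hsign]
        have hdd := ediv2 (show (t - s) * (t - s - 1)
            = (t - (s + 1)) * (t - (s + 1) - 1) + 2 * (t - s - 1) from by ring)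
        have hq1' : q ^ (-(s * (n : ℤ)) + -((t - s) * (t - s - 1) / 2 + (t - s) * ((n : ℤ) - t + s)))
            = q ^ (-(s * ((n : ℤ) + 1)) +
                -((t - s) * (t - s - 1) / 2 + (t - s) * (((n : ℤ) + 1) - t + s)) + s) * q ^ (t - s) := by
          rw [← zpow_add₀ hqne]; congr 1; ring
        have hq2' : q ^ (-((s + 1) * (n : ℤ)) +
              -((t - (s + 1)) * (t - (s + 1) - 1) / 2 + (t - (s + 1)) * ((n : ℤ) - t + (s + 1))))
            = q ^ (-(s * ((n : ℤ) + 1)) +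
                -((t - s) * (t - s - 1) / 2 + (t - s) * (((n : ℤ) + 1) - t + s)) + s) := by
          congr 1; linear_combination hdd
        rw [hq1', hq2']
        ring
    · rw [if_neg (fun hc => hεη hc.1), if_neg (fun hc => hεη hc.1), if_neg (fun hc => hεη hc.1)]
      simp

/-- Iterated q-derivatives of discrete delta functions. -/
theorem stmt4 (q γ : ℝ) (hq : q ∈ Set.Ioo (0 : ℝ) 1) (hγ : 0 < γ)
    (ε η : ℝ) (hε : ε = 1 ∨ ε = -1) (hη : η = 1 ∨ η = -1)
    (n : ℕ) (t s : ℤ) :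
    ((t : ℤ) - n ≤ s → s ≤ t →
      (qDeriv q)^[n] (qdelta q γ η t) (ε * γ * q ^ s) =
        (-1 : ℝ) ^ (t - s) * (if ε = η then 1 else 0) * η ^ n * γ ^ (-(n : ℤ)) *
          q ^ (-(s * n) : ℤ) * (1 - q) ^ (-(n : ℤ)) * qBinom q n (t - s).toNat *
          q ^ (-(((t - s) * (t - s - 1)) / 2 + (t - s) * ((n : ℤ) - t + s)) : ℤ)) ∧
    ((s < (t : ℤ) - n ∨ t < s ∨ ε ≠ η) →
      (qDeriv q)^[n] (qdelta q γ η t) (ε * γ * q ^ s) = 0) := by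
  obtain ⟨hq0, hq1⟩ := hq
  constructor
  · intro h1 h2
    rw [main_lemma hq0 hq1 hγ hη t n ε hε s]
    by_cases hεη : ε = η
    · rw [if_pos ⟨hεη, h1, h2⟩, if_pos hεη, Cfun]
      ring
    · rw [if_neg (fun hc => hεη hc.1), if_neg hεη]
      ring
  · intro hcase
    rw [main_lemma hq0 hq1 hγ hη t n ε hε s, if_neg]
    rintro ⟨he, hb1, hb2⟩
    rcases hcase with hh | hh | hh
    · omega
    · omega
    · exact hh he
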